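/- If there exists a word over {1,...,n-1} of length m containing all permutations of length n-1 as factors, then there exists a word over {1,...,n} of length n! + m containing all permutations of length n as factors. -/

import Mathlib

/-- `w` is a permutation of length `n`: a word on `{1,...,n}` with each letter occurring once. -/
def IsPermWord (n : Nat) (w : List Nat) : Prop :=
  w.length = n ∧ w.Nodup ∧ ∀ x ∈ w, 1 ≤ x ∧ x ≤ n

/-- Inserting `c :: p` after the distinguished copy of `p` preserves all factors of length
at most `p.length + 1`. -/
lemma insert_preserve {a p b f : List Nat} {c : Nat}
    (hf : f <:+: a ++ p ++ b) (hlen : f.length ≤ p.length + 1) :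
    f <:+: a ++ p ++ c :: p ++ b := by
  obtain ⟨s, t, hst⟩ := hf
  by_cases h : s.length + f.length ≤ a.length + p.length
  · -- the occurrence lies inside `a ++ p`
    have h1 : s ++ f <+: a ++ p ++ b := ⟨t, by simpa [List.append_assoc] using hst⟩
    have h2 : a ++ p <+: a ++ p ++ b := ⟨b, rfl⟩
    have h3 : s ++ f <+: a ++ p :=
      List.prefix_of_prefix_length_le h1 h2 (by simpa using h)
    obtain ⟨r, hr⟩ := h3
    refine ⟨s, r ++ c :: p ++ b, ?_⟩
    have : (s ++ f ++ r) ++ (c :: p ++ b) = (a ++ p) ++ (c :: p ++ b) := by rw [hr]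
    simpa [List.append_assoc] using this
  · -- the occurrence lies inside `p ++ b`
    push_neg at h
    have hle : f.length + t.length ≤ p.length + b.length := by
      have := congrArg List.length hst
      simp [List.length_append] at this
      omega
    have h1 : f ++ t <:+ a ++ p ++ b := ⟨s, by simpa [List.append_assoc] using hst⟩
    have h2 : p ++ b <:+ a ++ p ++ b := ⟨a, by simp [List.append_assoc]⟩
    have h3 : f ++ t <:+ p ++ b :=
      List.suffix_of_suffix_length_le h1 h2 (by simpa using hle)
    obtain ⟨r, hr⟩ := h3
    refine ⟨a ++ p ++ [c] ++ r, t, ?_⟩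
    have : (a ++ p ++ [c]) ++ (r ++ (f ++ t)) = (a ++ p ++ [c]) ++ (p ++ b) := by rw [hr]
    simpa [List.append_assoc] using this

/-- Core inductive construction: process a list `P` of (n-1)-permutation words, inserting
`n :: p` after an occurrence of each `p`. -/
lemma build (n : Nat) (hn : 1 ≤ n) :
    ∀ (P : List (List Nat)) (v : List Nat),
      (∀ x ∈ v, 1 ≤ x ∧ x ≤ n) →
      (∀ p ∈ P, p.length = n - 1 ∧ p <:+: v) →
      ∃ v', (∀ x ∈ v', 1 ≤ x ∧ x ≤ n) ∧ v'.length = v.length + n * P.length ∧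
        (∀ f : List Nat, f.length ≤ n → f <:+: v → f <:+: v') ∧
        (∀ p ∈ P, ∀ q : List Nat, q.length ≤ n → q <:+: p ++ n :: p → q <:+: v') := by
  intro P
  induction P with
  | nil =>
    intro v hv _
    exact ⟨v, hv, by simp, fun f _ hf => hf, fun p hp => by simp at hp⟩
  | cons p P' ih =>
    intro v hv hP
    obtain ⟨hplen, s, t, hst⟩ := hP p (by simp)
    set v₁ : List Nat := s ++ p ++ n :: p ++ t with hv₁
    have hsub : ∀ x ∈ v₁, x ∈ v ∨ x = n := by
      intro x hx
      simp only [hv₁, List.mem_append, List.mem_cons] at hx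
      rcases hx with ((hx | hx) | hx | hx) | hx
      · exact Or.inl (by rw [← hst]; simp [hx])
      · exact Or.inl (by rw [← hst]; simp [hx])
      · exact Or.inr hx
      · exact Or.inl (by rw [← hst]; simp [hx])
      · exact Or.inl (by rw [← hst]; simp [hx])
    have hv₁alpha : ∀ x ∈ v₁, 1 ≤ x ∧ x ≤ n := by
      intro x hx
      rcases hsub x hx with h | h
      · exact hv x h
      · omega
    have hv₁len : v₁.length = v.length + n := by
      have := congrArg List.length hst
      simp [List.length_append] at this
      simp [hv₁, List.length_append, hplen]
      omega
    have hpres : ∀ f : List Nat, f.length ≤ n → f <:+: v → f <:+: v₁ := by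
      intro f hf hfv
      rw [← hst] at hfv
      exact insert_preserve hfv (by omega)
    have hblock : (p ++ n :: p) <:+: v₁ := by
      exact ⟨s, t, by simp [hv₁, List.append_assoc]⟩
    obtain ⟨v', hv'alpha, hv'len, hv'pres, hv'cov⟩ := ih v₁ hv₁alpha (by
      intro p' hp'
      obtain ⟨hl, hi⟩ := hP p' (by simp [hp'])
      exact ⟨hl, hpres p' (by omega) hi⟩)
    refine ⟨v', hv'alpha, ?_, fun f hf hfv => hv'pres f hf (hpres f hf hfv), ?_⟩
    · rw [hv'len, hv₁len]; simp only [List.length_cons, Nat.mul_succ]; omega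
    · intro p'' hp'' q hq hqi
      rcases List.mem_cons.mp hp'' with rfl | hmem
      · exact hv'pres q hq (hqi.trans hblock)
      · exact hv'cov p'' hmem q hq hqi

/-- Ashlock–Tillotson recursion: an (n-1)-superpermutation of length m yields an
n-superpermutation of length n! + m. -/
theorem superpermutation_recursive_construction (n m : Nat) (hn : 1 ≤ n) (w : List Nat)
    (halpha : ∀ x ∈ w, 1 ≤ x ∧ x ≤ n - 1) (hlen : w.length = m)
    (huniv : ∀ p : List Nat, IsPermWord (n - 1) p → p <:+: w) :
    ∃ w' : List Nat, (∀ x ∈ w', 1 ≤ x ∧ x ≤ n) ∧ w'.length = n.factorial + m ∧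
      ∀ p : List Nat, IsPermWord n p → p <:+: w' := by
  set R : List Nat := List.range' 1 (n - 1) with hR
  have hRlen : R.length = n - 1 := by simp [hR]
  have hRnodup : R.Nodup := List.nodup_range' ..
  set P : List (List Nat) := R.permutations with hP
  -- every member of P is a permutation word of length n-1, hence an infix of w
  have hPmem : ∀ p ∈ P, IsPermWord (n - 1) p := by
    intro p hp
    have hperm : List.Perm p R := List.mem_permutations.mp hp
    refine ⟨by rw [hperm.length_eq, hRlen], hperm.nodup_iff.mpr hRnodup, ?_⟩
    intro x hx
    have := List.mem_range'_1.mp (hperm.subset hx)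
    omega
  have halpha' : ∀ x ∈ w, 1 ≤ x ∧ x ≤ n := by
    intro x hx
    have := halpha x hx
    omega
  obtain ⟨w', hw'alpha, hw'len, _, hw'cov⟩ := build n hn P w halpha'
    (fun p hp => ⟨(hPmem p hp).1, huniv p (hPmem p hp)⟩)
  refine ⟨w', hw'alpha, ?_, ?_⟩
  · have hPlen : P.length = (n - 1).factorial := by
      rw [hP, List.length_permutations, hRlen]
    have hfac : n * (n - 1).factorial = n.factorial := by
      obtain ⟨k, rfl⟩ : ∃ k, n = k + 1 := ⟨n - 1, by omega⟩
      simp [Nat.factorial_succ]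
    rw [hw'len, hPlen, hfac, hlen]; omega
  · intro q hq
    obtain ⟨hqlen, hqnodup, hqmem⟩ := hq
    -- q is a permutation of range' 1 n, so n ∈ q
    have hqsub : q ⊆ List.range' 1 n := by
      intro x hx
      have := hqmem x hx
      exact List.mem_range'_1.mpr (by omega)
    have hqperm : List.Perm q (List.range' 1 n) :=
      (List.subperm_of_subset hqnodup hqsub).perm_of_length_le (by simp [hqlen])
    have hnq : n ∈ q := hqperm.mem_iff.mpr (List.mem_range'_1.mpr (by omega))
    obtain ⟨x, y, rfl⟩ := List.append_of_mem hnq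
    -- the rotated word p = y ++ x is an (n-1)-permutation
    set p : List Nat := y ++ x with hpdef
    have hxny : x.Nodup ∧ (n :: y).Nodup ∧ x.Disjoint (n :: y) := List.nodup_append'.mp hqnodup
    have hpnodup : p.Nodup := by
      rw [hpdef, List.nodup_append']
      refine ⟨(List.nodup_cons.mp hxny.2.1).2, hxny.1, ?_⟩
      intro z hzy hzx
      exact hxny.2.2 hzx (List.mem_cons_of_mem _ hzy)
    have hplen : p.length = n - 1 := by
      have := hqlen
      simp [List.length_append] at this
      simp [hpdef, List.length_append]
      omega
    have hpsub : p ⊆ R := by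
      intro z hz
      have hzq : z ∈ x ++ n :: y := by
        simp only [hpdef, List.mem_append] at hz
        rcases hz with hz | hz
        · simp [hz]
        · simp [hz]
      have hb := hqmem z hzq
      have hzn : z ≠ n := by
        rintro rfl
        simp only [hpdef, List.mem_append] at hz
        rcases hz with hz | hz
        · exact (List.nodup_cons.mp hxny.2.1).1 hz
        · exact hxny.2.2 hz (by simp)
      rw [hR]
      exact List.mem_range'_1.mpr (by omega)
    have hpperm : List.Perm p R :=
      (List.subperm_of_subset hpnodup hpsub).perm_of_length_le (by rw [hplen, hRlen])
    have hpP : p ∈ P := List.mem_permutations.mpr hpperm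
    have hqin : (x ++ n :: y) <:+: p ++ n :: p :=
      ⟨y, x, by simp [hpdef, List.append_assoc]⟩
    exact hw'cov p hpP (x ++ n :: y) (by omega) hqin
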